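/- With R̄_L(x,y,z) = R_L(x,y,z) − 1, one has the identities of formal power series (1−xz+x)² · R̄_{U2}(x,y,z) = x(1−xz) · R̄_{UL_{S3}}(x,y,z) and (1−xz+x)² · R̄_{U3}(x,y,z) = x(1−xz) · R̄_{UL_{S3}}(x,y,z), where U2 is the set of Schröder paths with at least one U step that start with an H step and end with a D step, and U3 is the set of Schröder paths with at least one U step that start with a U step and end with an H step. -/

import Mathlib

/-- A lattice path from `(0,0)` to `(2n,0)` with steps in `S` that never goes
below the x-axis, encoded as the list of its steps. -/
def IsPath (S : Set (ℤ × ℤ)) (n : ℕ) (p : List (ℤ × ℤ)) : Prop :=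
  (∀ s ∈ p, s ∈ S) ∧
  (p.map Prod.fst).sum = 2 * n ∧
  (p.map Prod.snd).sum = 0 ∧
  ∀ q : List (ℤ × ℤ), q <+: p → 0 ≤ (q.map Prod.snd).sum

def S1 : Set (ℤ × ℤ) := {(1, 1), (1, -1)}
def S2 : Set (ℤ × ℤ) := {s | ∃ r : ℤ, 0 < r ∧ (s = (r, r) ∨ s = (r, -r))}
def S3 : Set (ℤ × ℤ) := {(1, 1), (1, -1), (2, 0)}
def S4 : Set (ℤ × ℤ) := {s | ∃ r : ℤ, 0 < r ∧ (s = (r, r) ∨ s = (r, -r) ∨ s = (2 * r, 0))}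
def S5 : Set (ℤ × ℤ) := {s | s = (1, 1) ∨ s = (1, -1) ∨ ∃ r : ℤ, 0 < r ∧ s = (2 * r, 0)}
def S6 : Set (ℤ × ℤ) := {s | (∃ r : ℤ, 0 < r ∧ (s = (r, r) ∨ s = (r, -r))) ∨ s = (2, 0)}

/-- Number of runs: vertices lying between two consecutive steps of the same kind. -/
def runs (p : List (ℤ × ℤ)) : ℕ :=
  (p.zip p.tail).countP (fun q => q.1 == q.2)

/-- Number of diagonal runs: vertices between two consecutive equal non-horizontal steps. -/
def dr (p : List (ℤ × ℤ)) : ℕ :=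
  (p.zip p.tail).countP (fun q => q.1 == q.2 && q.1.2 != 0)

/-- Number of horizontal runs: vertices between two consecutive horizontal steps. -/
def hr (p : List (ℤ × ℤ)) : ℕ :=
  (p.zip p.tail).countP (fun q => q.1 == q.2 && q.1.2 == 0)

/-- The path has no horizontal step lying on the x-axis. -/
def NoFlatOnAxis (p : List (ℤ × ℤ)) : Prop :=
  ∀ q s, q ++ [s] <+: p → s.2 = 0 → (q.map Prod.snd).sum ≠ 0

noncomputable def Xv : MvPowerSeries (Fin 3) ℚ := MvPowerSeries.X 0
noncomputable def Yv : MvPowerSeries (Fin 3) ℚ := MvPowerSeries.X 1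
noncomputable def Zv : MvPowerSeries (Fin 3) ℚ := MvPowerSeries.X 2

/-- The monomial `x^n y^a z^b` as an exponent vector. -/
noncomputable def m3 (n a b : ℕ) : Fin 3 →₀ ℕ :=
  Finsupp.single (0 : Fin 3) n + Finsupp.single 1 a + Finsupp.single 2 b

noncomputable def Apoly : MvPowerSeries (Fin 3) ℚ := 1 - Xv * Zv
noncomputable def Bpoly : MvPowerSeries (Fin 3) ℚ := Xv + Yv * (1 - Xv * Zv)
noncomputable def Cpoly : MvPowerSeries (Fin 3) ℚ := 1 - Xv * Zv + Xv
noncomputable def Delta : MvPowerSeries (Fin 3) ℚ :=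
  Apoly ^ 4 - 2 * Xv * Apoly ^ 2 * (Bpoly ^ 2 + Cpoly ^ 2)
    + Xv ^ 2 * (Bpoly ^ 2 - Cpoly ^ 2) ^ 2

def U : ℤ × ℤ := (1, 1)
def D : ℤ × ℤ := (1, -1)

def Hstep : ℤ × ℤ := (2, 0)

lemma mem_S3 {s : ℤ × ℤ} (h : s ∈ S3) : s = U ∨ s = D ∨ s = Hstep := h

lemma fst_ge_one {s : ℤ × ℤ} (h : s ∈ S3) : 1 ≤ s.1 := by
  rcases mem_S3 h with h | h | h <;> simp [h, U, D, Hstep]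

lemma length_le_sum (l : List ℤ) (h : ∀ x ∈ l, 1 ≤ x) : (l.length : ℤ) ≤ l.sum := by
  induction l with
  | nil => simp
  | cons x t ih =>
    simp only [List.length_cons, List.sum_cons, Nat.cast_add, Nat.cast_one]
    have := h x (by simp)
    have := ih (fun y hy => h y (by simp [hy]))
    push_cast
    linarith

lemma path_length_le {n : ℕ} {p : List (ℤ × ℤ)} (h : IsPath S3 n p) : p.length ≤ 2 * n := by
  have h1 : ((p.map Prod.fst).length : ℤ) ≤ (p.map Prod.fst).sum :=
    length_le_sum _ (by
      intro x hx
      simp only [List.mem_map] at hx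
      obtain ⟨s, hs, rfl⟩ := hx
      exact fst_ge_one (h.1 s hs))
  rw [h.2.1, List.length_map] at h1
  exact_mod_cast h1

lemma no_path_zero {p : List (ℤ × ℤ)} (h : IsPath S3 0 p) (hU : U ∈ p) : False := by
  have := path_length_le h
  have : p = [] := by
    cases p with
    | nil => rfl
    | cons a t => simp at this
  subst this; simp at hU

noncomputable def encode (s : ℤ × ℤ) : Fin 3 := if s = U then 0 else if s = D then 1 else 2

noncomputable def decode (i : Fin 3) : ℤ × ℤ := if i = 0 then U else if i = 1 then D else Hstep

lemma decode_encode {s : ℤ × ℤ} (h : s ∈ S3) : decode (encode s) = s := by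
  rcases mem_S3 h with rfl | rfl | rfl <;> simp [encode, decode, U, D, Hstep]

lemma finite_paths (n : ℕ) (P : List (ℤ × ℤ) → Prop) :
    Finite {p : List (ℤ × ℤ) // IsPath S3 n p ∧ P p} := by
  have hfin : Finite {l : List (Fin 3) // l.length ≤ 2 * n} :=
    (List.finite_length_le (Fin 3) (2 * n)).to_subtype
  refine Finite.of_injective (β := {l : List (Fin 3) // l.length ≤ 2 * n})
    (fun p => ⟨p.1.map encode, by rw [List.length_map]; exact path_length_le p.2.1⟩) ?_
  rintro ⟨p, hp⟩ ⟨q, hq⟩ h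
  simp only [Subtype.mk.injEq] at h ⊢
  have key : ∀ r : List (ℤ × ℤ), (∀ s ∈ r, s ∈ S3) → (r.map encode).map decode = r := by
    intro r hr
    rw [List.map_map]
    exact List.map_congr_left (fun s hs => decode_encode (hr s hs)) |>.trans (List.map_id r)
  calc p = (p.map encode).map decode := (key p hp.1.1).symm
    _ = (q.map encode).map decode := by rw [h]
    _ = q := key q hq.1.1

-- head and last classification
lemma head_cases {n : ℕ} {s : ℤ × ℤ} {t : List (ℤ × ℤ)} (h : IsPath S3 n (s :: t)) :
    s = U ∨ s = Hstep := by
  have hs := h.1 s (by simp)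
  have hpre : 0 ≤ ([s].map Prod.snd).sum := h.2.2.2 [s] ⟨t, rfl⟩
  rcases mem_S3 hs with rfl | rfl | rfl
  · left; rfl
  · simp [D] at hpre
  · right; rfl

lemma last_cases {n : ℕ} {q : List (ℤ × ℤ)} {s : ℤ × ℤ} (h : IsPath S3 n (q ++ [s])) :
    s = D ∨ s = Hstep := by
  have hs := h.1 s (by simp)
  have hsum := h.2.2.1
  have hpre : 0 ≤ (q.map Prod.snd).sum := h.2.2.2 q ⟨[s], rfl⟩
  rcases mem_S3 hs with rfl | rfl | rfl
  · exfalso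
    simp only [List.map_append, List.sum_append, List.map_cons, List.map_nil,
      List.sum_cons, List.sum_nil] at hsum
    simp [U] at hsum; omega
  · left; rfl
  · right; rfl

-- zip-tail lemmas
lemma zipTail_concat (l : List (ℤ × ℤ)) (y x : ℤ × ℤ) :
    (l ++ [y, x]).zip (l ++ [y, x]).tail
      = ((l ++ [y]).zip (l ++ [y]).tail) ++ [(y, x)] := by
  induction l with
  | nil => simp
  | cons a l ih =>
    cases l with
    | nil => simp
    | cons c l' =>
      simp only [List.cons_append, List.tail_cons, List.zip_cons_cons] at *
      rw [ih]

lemma dr_cons₂ (x y : ℤ × ℤ) (t : List (ℤ × ℤ)) :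
    dr (x :: y :: t) = (if x = y ∧ x.2 ≠ 0 then 1 else 0) + dr (y :: t) := by
  simp only [dr, List.tail_cons, List.zip_cons_cons, List.countP_cons]
  by_cases h : x = y ∧ x.2 ≠ 0
  · simp [h.1, h.2]; omega
  · rw [if_neg h]
    have : ¬(x == y && x.2 != 0) = true := by
      simp only [Bool.and_eq_true, beq_iff_eq, bne_iff_ne, ne_eq]
      exact h
    simp [this]

lemma hr_cons₂ (x y : ℤ × ℤ) (t : List (ℤ × ℤ)) :
    hr (x :: y :: t) = (if x = y ∧ x.2 = 0 then 1 else 0) + hr (y :: t) := by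
  simp only [hr, List.tail_cons, List.zip_cons_cons, List.countP_cons]
  by_cases h : x = y ∧ x.2 = 0
  · simp [h.1, h.2]; omega
  · rw [if_neg h]
    have : ¬(x == y && x.2 == 0) = true := by
      simp only [Bool.and_eq_true, beq_iff_eq]
      exact h
    simp [this]

lemma dr_concat₂ (l : List (ℤ × ℤ)) (y x : ℤ × ℤ) :
    dr (l ++ [y, x]) = dr (l ++ [y]) + (if y = x ∧ y.2 ≠ 0 then 1 else 0) := by
  simp only [dr, zipTail_concat, List.countP_append, List.countP_cons, List.countP_nil]
  by_cases h : y = x ∧ y.2 ≠ 0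
  · simp [h.1, h.2]
  · rw [if_neg h]
    have : ¬(y == x && y.2 != 0) = true := by
      simp only [Bool.and_eq_true, beq_iff_eq, bne_iff_ne, ne_eq]; exact h
    simp [this]

lemma hr_concat₂ (l : List (ℤ × ℤ)) (y x : ℤ × ℤ) :
    hr (l ++ [y, x]) = hr (l ++ [y]) + (if y = x ∧ y.2 = 0 then 1 else 0) := by
  simp only [hr, zipTail_concat, List.countP_append, List.countP_cons, List.countP_nil]
  by_cases h : y = x ∧ y.2 = 0
  · simp [h.1, h.2]
  · rw [if_neg h]
    have : ¬(y == x && y.2 == 0) = true := by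
      simp only [Bool.and_eq_true, beq_iff_eq]; exact h
    simp [this]

lemma isPath_cons_H {n : ℕ} {q : List (ℤ × ℤ)} (h : IsPath S3 n q) :
    IsPath S3 (n + 1) (Hstep :: q) := by
  obtain ⟨h1, h2, h3, h4⟩ := h
  refine ⟨?_, ?_, ?_, ?_⟩
  · intro s hs
    rcases List.mem_cons.mp hs with rfl | hs
    · right; right; rfl
    · exact h1 s hs
  · simp only [List.map_cons, List.sum_cons, h2, Hstep]; push_cast; ring
  · simp [Hstep, h3]
  · intro r hr
    rcases List.prefix_cons_iff.mp hr with rfl | ⟨t, rfl, ht⟩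
    · simp
    · have := h4 t ht
      simp only [List.map_cons, List.sum_cons, Hstep]
      omega

lemma isPath_of_cons_H {n : ℕ} {q : List (ℤ × ℤ)} (h : IsPath S3 (n + 1) (Hstep :: q)) :
    IsPath S3 n q := by
  obtain ⟨h1, h2, h3, h4⟩ := h
  refine ⟨fun s hs => h1 s (by simp [hs]), ?_, ?_, ?_⟩
  · simp only [List.map_cons, List.sum_cons, Hstep] at h2; push_cast at h2 ⊢; linarith
  · simpa [Hstep] using h3
  · intro r hr
    have := h4 (Hstep :: r) (by simpa using hr)
    simpa [Hstep] using this

lemma isPath_concat_H {n : ℕ} {q : List (ℤ × ℤ)} (h : IsPath S3 n q) :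
    IsPath S3 (n + 1) (q ++ [Hstep]) := by
  obtain ⟨h1, h2, h3, h4⟩ := h
  refine ⟨?_, ?_, ?_, ?_⟩
  · intro s hs
    rcases List.mem_append.mp hs with hs | hs
    · exact h1 s hs
    · simp at hs; subst hs; right; right; rfl
  · simp [h2, Hstep]; push_cast; ring
  · simp [Hstep, h3]
  · intro r hr
    rcases List.prefix_concat_iff.mp hr with rfl | hr
    · simp [Hstep, h3]
    · exact h4 r hr

lemma isPath_of_concat_H {n : ℕ} {q : List (ℤ × ℤ)} (h : IsPath S3 (n + 1) (q ++ [Hstep])) :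
    IsPath S3 n q := by
  obtain ⟨h1, h2, h3, h4⟩ := h
  refine ⟨fun s hs => h1 s (by simp [hs]), ?_, ?_, ?_⟩
  · simp only [List.map_append, List.sum_append, List.map_cons, List.map_nil, List.sum_cons,
      List.sum_nil, Hstep] at h2
    push_cast at h2 ⊢; linarith
  · simpa [Hstep] using h3
  · intro r hr
    exact h4 r (hr.trans ⟨[Hstep], rfl⟩)

lemma U_ne_H : U ≠ Hstep := by decide
lemma mem_of_memU {p : List (ℤ × ℤ)} (h : U ∈ Hstep :: p) : U ∈ p := by
  rcases List.mem_cons.mp h with h | h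
  · exact absurd h U_ne_H
  · exact h

lemma card_prepend (e : ℤ × ℤ) (n a b : ℕ) :
    Nat.card {p : List (ℤ × ℤ) // IsPath S3 (n + 1) p ∧ U ∈ p ∧ p.head? = some Hstep ∧
        p.getLast? = some e ∧ dr p = a ∧ hr p = b}
      = Nat.card {p : List (ℤ × ℤ) // IsPath S3 n p ∧ U ∈ p ∧ p.head? = some U ∧
          p.getLast? = some e ∧ dr p = a ∧ hr p = b}
        + Nat.card {p : List (ℤ × ℤ) // IsPath S3 n p ∧ U ∈ p ∧ p.head? = some Hstep ∧
            p.getLast? = some e ∧ dr p = a ∧ hr p + 1 = b} := by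
  classical
  haveI := finite_paths n (fun p => U ∈ p ∧ p.head? = some U ∧
    p.getLast? = some e ∧ dr p = a ∧ hr p = b)
  haveI := finite_paths n (fun p => U ∈ p ∧ p.head? = some Hstep ∧
    p.getLast? = some e ∧ dr p = a ∧ hr p + 1 = b)
  rw [← Nat.card_sum]
  have prop : ∀ x : ({p : List (ℤ × ℤ) // IsPath S3 n p ∧ U ∈ p ∧ p.head? = some U ∧
          p.getLast? = some e ∧ dr p = a ∧ hr p = b} ⊕
        {p : List (ℤ × ℤ) // IsPath S3 n p ∧ U ∈ p ∧ p.head? = some Hstep ∧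
          p.getLast? = some e ∧ dr p = a ∧ hr p + 1 = b}),
      IsPath S3 (n + 1) (Hstep :: (x.elim Subtype.val Subtype.val)) ∧
        U ∈ (Hstep :: (x.elim Subtype.val Subtype.val)) ∧
        (Hstep :: (x.elim Subtype.val Subtype.val)).head? = some Hstep ∧
        (Hstep :: (x.elim Subtype.val Subtype.val)).getLast? = some e ∧
        dr (Hstep :: (x.elim Subtype.val Subtype.val)) = a ∧
        hr (Hstep :: (x.elim Subtype.val Subtype.val)) = b := by
    rintro (⟨p, hpath, hU, hh, hl, hdr, hhr⟩ | ⟨p, hpath, hU, hh, hl, hdr, hhr⟩) <;>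
      simp only [Sum.elim_inl, Sum.elim_inr]
    · cases p with
      | nil => exact absurd hh (by simp)
      | cons s t =>
        have hs : s = U := by simpa using hh
        subst hs
        refine ⟨isPath_cons_H hpath, by simp [hU], rfl, by rwa [List.getLast?_cons_cons], ?_, ?_⟩
        · rw [dr_cons₂, if_neg (by decide)]; simpa using hdr
        · rw [hr_cons₂, if_neg (by decide)]; simpa using hhr
    · cases p with
      | nil => exact absurd hh (by simp)
      | cons s t =>
        have hs : s = Hstep := by simpa using hh
        subst hs
        refine ⟨isPath_cons_H hpath, by simp [hU], rfl, by rwa [List.getLast?_cons_cons], ?_, ?_⟩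
        · rw [dr_cons₂, if_neg (by decide)]; simpa using hdr
        · rw [hr_cons₂, if_pos (by decide)]; omega
  refine (Nat.card_eq_of_bijective (fun x => ⟨_, prop x⟩) ⟨?_, ?_⟩).symm
  · rintro (⟨p, hp⟩ | ⟨p, hp⟩) (⟨q, hq⟩ | ⟨q, hq⟩) h <;>
      simp only [Sum.elim_inl, Sum.elim_inr, Subtype.mk.injEq, List.cons.injEq, true_and] at h
    · simpa using h
    · exact absurd (hp.2.2.1.symm.trans (h ▸ hq.2.2.1)) (by simp; decide)
    · exact absurd (hp.2.2.1.symm.trans (h ▸ hq.2.2.1)) (by simp; decide)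
    · simpa using h
  · rintro ⟨p, hpath, hU, hh, hl, hdr, hhr⟩
    cases p with
    | nil => exact absurd hh (by simp)
    | cons s t =>
      have hs : s = Hstep := by simpa using hh
      subst hs
      have hUt : U ∈ t := mem_of_memU hU
      have hpt : IsPath S3 n t := isPath_of_cons_H hpath
      cases t with
      | nil => simp at hUt
      | cons y t' =>
        have hlt : (y :: t').getLast? = some e := by rwa [List.getLast?_cons_cons] at hl
        rcases head_cases hpt with hy | hy <;> subst hy
        · exact ⟨Sum.inl ⟨U :: t', hpt, hUt, rfl, hlt,
            by rw [dr_cons₂, if_neg (by decide)] at hdr; simpa using hdr,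
            by rw [hr_cons₂, if_neg (by decide)] at hhr; simpa using hhr⟩, rfl⟩
        · exact ⟨Sum.inr ⟨Hstep :: t', hpt, hUt, rfl, hlt,
            by rw [dr_cons₂, if_neg (by decide)] at hdr; simpa using hdr,
            by rw [hr_cons₂, if_pos (by decide)] at hhr; omega⟩, rfl⟩
lemma head?_append_left {α : Type*} {l : List α} (h : l ≠ []) (r : List α) :
    (l ++ r).head? = l.head? := by
  cases l with
  | nil => exact absurd rfl h
  | cons a t => rfl
lemma exists_concat_of_getLast? {α : Type*} {l : List α} {y : α} (h : l.getLast? = some y) :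
    ∃ t, l = t ++ [y] := by
  rcases List.eq_nil_or_concat l with rfl | ⟨L, c, rfl⟩
  · simp at h
  · rw [List.concat_eq_append, List.getLast?_concat] at h
    obtain rfl : c = y := by injection h
    exact ⟨L, by simp⟩

lemma memU_of_concat {p : List (ℤ × ℤ)} (h : U ∈ p ++ [Hstep]) : U ∈ p := by
  rcases List.mem_append.mp h with h | h
  · exact h
  · simp at h; exact absurd h U_ne_H

lemma card_append (n a b : ℕ) :
    Nat.card {p : List (ℤ × ℤ) // IsPath S3 (n + 1) p ∧ U ∈ p ∧ p.head? = some U ∧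
        p.getLast? = some Hstep ∧ dr p = a ∧ hr p = b}
      = Nat.card {p : List (ℤ × ℤ) // IsPath S3 n p ∧ U ∈ p ∧ p.head? = some U ∧
          p.getLast? = some D ∧ dr p = a ∧ hr p = b}
        + Nat.card {p : List (ℤ × ℤ) // IsPath S3 n p ∧ U ∈ p ∧ p.head? = some U ∧
            p.getLast? = some Hstep ∧ dr p = a ∧ hr p + 1 = b} := by
  classical
  haveI := finite_paths n (fun p => U ∈ p ∧ p.head? = some U ∧
    p.getLast? = some D ∧ dr p = a ∧ hr p = b)
  haveI := finite_paths n (fun p => U ∈ p ∧ p.head? = some U ∧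
    p.getLast? = some Hstep ∧ dr p = a ∧ hr p + 1 = b)
  rw [← Nat.card_sum]
  have prop : ∀ x : ({p : List (ℤ × ℤ) // IsPath S3 n p ∧ U ∈ p ∧ p.head? = some U ∧
          p.getLast? = some D ∧ dr p = a ∧ hr p = b} ⊕
        {p : List (ℤ × ℤ) // IsPath S3 n p ∧ U ∈ p ∧ p.head? = some U ∧
          p.getLast? = some Hstep ∧ dr p = a ∧ hr p + 1 = b}),
      IsPath S3 (n + 1) ((x.elim Subtype.val Subtype.val) ++ [Hstep]) ∧
        U ∈ ((x.elim Subtype.val Subtype.val) ++ [Hstep]) ∧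
        ((x.elim Subtype.val Subtype.val) ++ [Hstep]).head? = some U ∧
        ((x.elim Subtype.val Subtype.val) ++ [Hstep]).getLast? = some Hstep ∧
        dr ((x.elim Subtype.val Subtype.val) ++ [Hstep]) = a ∧
        hr ((x.elim Subtype.val Subtype.val) ++ [Hstep]) = b := by
    rintro (⟨p, hpath, hU, hh, hl, hdr, hhr⟩ | ⟨p, hpath, hU, hh, hl, hdr, hhr⟩) <;>
      simp only [Sum.elim_inl, Sum.elim_inr]
    · obtain ⟨l, rfl⟩ := exists_concat_of_getLast? hl
      have hne : l ++ [D] ≠ ([] : List (ℤ × ℤ)) := by simp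
      refine ⟨isPath_concat_H hpath, List.mem_append.mpr (Or.inl hU),
        by rw [head?_append_left hne]; exact hh, List.getLast?_concat, ?_, ?_⟩
      · rw [List.append_assoc]
        show dr (l ++ [D, Hstep]) = a
        rw [dr_concat₂, if_neg (by decide)]; simpa using hdr
      · rw [List.append_assoc]
        show hr (l ++ [D, Hstep]) = b
        rw [hr_concat₂, if_neg (by decide)]; simpa using hhr
    · obtain ⟨l, rfl⟩ := exists_concat_of_getLast? hl
      have hne : l ++ [Hstep] ≠ ([] : List (ℤ × ℤ)) := by simp
      refine ⟨isPath_concat_H hpath, List.mem_append.mpr (Or.inl hU),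
        by rw [head?_append_left hne]; exact hh, List.getLast?_concat, ?_, ?_⟩
      · rw [List.append_assoc]
        show dr (l ++ [Hstep, Hstep]) = a
        rw [dr_concat₂, if_neg (by decide)]; simpa using hdr
      · rw [List.append_assoc]
        show hr (l ++ [Hstep, Hstep]) = b
        rw [hr_concat₂, if_pos (by decide)]
        have : hr (l ++ [Hstep]) + 1 = b := hhr
        omega
  refine (Nat.card_eq_of_bijective (fun x => ⟨_, prop x⟩) ⟨?_, ?_⟩).symm
  · rintro (⟨p, hp⟩ | ⟨p, hp⟩) (⟨q, hq⟩ | ⟨q, hq⟩) h <;>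
      simp only [Sum.elim_inl, Sum.elim_inr, Subtype.mk.injEq] at h <;>
      have h2 := List.append_cancel_right h
    · simpa using h2
    · exact absurd (hp.2.2.2.1.symm.trans (h2 ▸ hq.2.2.2.1)) (by simp; decide)
    · exact absurd (hp.2.2.2.1.symm.trans (h2 ▸ hq.2.2.2.1)) (by simp; decide)
    · simpa using h2
  · rintro ⟨p, hpath, hU, hh, hl, hdr, hhr⟩
    obtain ⟨q, rfl⟩ := exists_concat_of_getLast? hl
    have hUq : U ∈ q := memU_of_concat hU
    have hqne : q ≠ [] := by rintro rfl; simp at hUq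
    have hpq : IsPath S3 n q := isPath_of_concat_H hpath
    have hhq : q.head? = some U := by rwa [head?_append_left hqne] at hh
    obtain ⟨l, y, rfl⟩ : ∃ l y, q = l ++ [y] := by
      rcases List.eq_nil_or_concat q with rfl | ⟨L, c, rfl⟩
      · exact absurd rfl hqne
      · exact ⟨L, c, by simp⟩
    rcases last_cases hpq with hy | hy <;> subst hy
    · refine ⟨Sum.inl ⟨l ++ [D], hpq, hUq, hhq, List.getLast?_concat, ?_, ?_⟩, rfl⟩
      · rw [List.append_assoc] at hdr
        have : dr (l ++ [D, Hstep]) = a := hdr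
        rw [dr_concat₂, if_neg (by decide)] at this; exact this
      · rw [List.append_assoc] at hhr
        have : hr (l ++ [D, Hstep]) = b := hhr
        rw [hr_concat₂, if_neg (by decide)] at this; exact this
    · refine ⟨Sum.inr ⟨l ++ [Hstep], hpq, hUq, hhq, List.getLast?_concat, ?_, ?_⟩, rfl⟩
      · rw [List.append_assoc] at hdr
        have : dr (l ++ [Hstep, Hstep]) = a := hdr
        rw [dr_concat₂, if_neg (by decide)] at this; exact this
      · rw [List.append_assoc] at hhr
        have : hr (l ++ [Hstep, Hstep]) = b := hhr
        rw [hr_concat₂, if_pos (by decide)] at this; omega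

lemma card_partition (n a b : ℕ) :
    Nat.card {p : List (ℤ × ℤ) // IsPath S3 n p ∧ U ∈ p ∧ dr p = a ∧ hr p = b}
      = Nat.card {p : List (ℤ × ℤ) // IsPath S3 n p ∧ U ∈ p ∧ p.head? = some U ∧
          p.getLast? = some D ∧ dr p = a ∧ hr p = b}
        + Nat.card {p : List (ℤ × ℤ) // IsPath S3 n p ∧ U ∈ p ∧ p.head? = some Hstep ∧
            p.getLast? = some D ∧ dr p = a ∧ hr p = b}
        + Nat.card {p : List (ℤ × ℤ) // IsPath S3 n p ∧ U ∈ p ∧ p.head? = some U ∧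
            p.getLast? = some Hstep ∧ dr p = a ∧ hr p = b}
        + Nat.card {p : List (ℤ × ℤ) // IsPath S3 n p ∧ U ∈ p ∧ p.head? = some Hstep ∧
            p.getLast? = some Hstep ∧ dr p = a ∧ hr p = b} := by
  classical
  haveI := finite_paths n (fun p => U ∈ p ∧ p.head? = some U ∧
    p.getLast? = some D ∧ dr p = a ∧ hr p = b)
  haveI := finite_paths n (fun p => U ∈ p ∧ p.head? = some Hstep ∧
    p.getLast? = some D ∧ dr p = a ∧ hr p = b)
  haveI := finite_paths n (fun p => U ∈ p ∧ p.head? = some U ∧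
    p.getLast? = some Hstep ∧ dr p = a ∧ hr p = b)
  haveI := finite_paths n (fun p => U ∈ p ∧ p.head? = some Hstep ∧
    p.getLast? = some Hstep ∧ dr p = a ∧ hr p = b)
  rw [← Nat.card_sum, ← Nat.card_sum, ← Nat.card_sum]
  have prop : ∀ x : ((({p : List (ℤ × ℤ) // IsPath S3 n p ∧ U ∈ p ∧ p.head? = some U ∧
          p.getLast? = some D ∧ dr p = a ∧ hr p = b} ⊕
        {p : List (ℤ × ℤ) // IsPath S3 n p ∧ U ∈ p ∧ p.head? = some Hstep ∧
          p.getLast? = some D ∧ dr p = a ∧ hr p = b}) ⊕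
        {p : List (ℤ × ℤ) // IsPath S3 n p ∧ U ∈ p ∧ p.head? = some U ∧
          p.getLast? = some Hstep ∧ dr p = a ∧ hr p = b}) ⊕
        {p : List (ℤ × ℤ) // IsPath S3 n p ∧ U ∈ p ∧ p.head? = some Hstep ∧
          p.getLast? = some Hstep ∧ dr p = a ∧ hr p = b}),
      IsPath S3 n (x.elim (Sum.elim (Sum.elim Subtype.val Subtype.val) Subtype.val) Subtype.val) ∧
        U ∈ (x.elim (Sum.elim (Sum.elim Subtype.val Subtype.val) Subtype.val) Subtype.val) ∧
        dr (x.elim (Sum.elim (Sum.elim Subtype.val Subtype.val) Subtype.val) Subtype.val) = a ∧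
        hr (x.elim (Sum.elim (Sum.elim Subtype.val Subtype.val) Subtype.val) Subtype.val) = b := by
    rintro (((⟨p, h1, h2, _, _, h5, h6⟩ | ⟨p, h1, h2, _, _, h5, h6⟩) |
      ⟨p, h1, h2, _, _, h5, h6⟩) | ⟨p, h1, h2, _, _, h5, h6⟩) <;>
      exact ⟨h1, h2, h5, h6⟩
  refine (Nat.card_eq_of_bijective (fun x => ⟨_, prop x⟩) ⟨?_, ?_⟩).symm
  · rintro (((⟨p, hp⟩ | ⟨p, hp⟩) | ⟨p, hp⟩) | ⟨p, hp⟩)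
      (((⟨q, hq⟩ | ⟨q, hq⟩) | ⟨q, hq⟩) | ⟨q, hq⟩) h <;>
      simp only [Sum.elim_inl, Sum.elim_inr, Subtype.mk.injEq] at h <;>
      first
        | simpa using h
        | exact absurd (hp.2.2.1.symm.trans (h ▸ hq.2.2.1)) (by decide)
        | exact absurd (hp.2.2.2.1.symm.trans (h ▸ hq.2.2.2.1)) (by decide)
  · rintro ⟨p, hpath, hU, hdr, hhr⟩
    have hpne : p ≠ [] := by rintro rfl; simp at hU
    have hh : p.head? = some U ∨ p.head? = some Hstep := by
      cases p with
      | nil => exact absurd rfl hpne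
      | cons s t =>
        rcases head_cases hpath with rfl | rfl
        · left; rfl
        · right; rfl
    have hl : p.getLast? = some D ∨ p.getLast? = some Hstep := by
      obtain ⟨l, y, rfl⟩ : ∃ l y, p = l ++ [y] := by
        rcases List.eq_nil_or_concat p with rfl | ⟨L, c, rfl⟩
        · exact absurd rfl hpne
        · exact ⟨L, c, by simp⟩
      rcases last_cases hpath with rfl | rfl
      · left; exact List.getLast?_concat
      · right; exact List.getLast?_concat
    rcases hh with hh | hh <;> rcases hl with hl | hl
    · exact ⟨Sum.inl (Sum.inl (Sum.inl ⟨p, hpath, hU, hh, hl, hdr, hhr⟩)), rfl⟩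
    · exact ⟨Sum.inl (Sum.inr ⟨p, hpath, hU, hh, hl, hdr, hhr⟩), rfl⟩
    · exact ⟨Sum.inl (Sum.inl (Sum.inr ⟨p, hpath, hU, hh, hl, hdr, hhr⟩)), rfl⟩
    · exact ⟨Sum.inr ⟨p, hpath, hU, hh, hl, hdr, hhr⟩, rfl⟩

lemma m3_apply0 (n a b : ℕ) : m3 n a b 0 = n := by
  simp [m3, Finsupp.single_apply]
lemma m3_apply1 (n a b : ℕ) : m3 n a b 1 = a := by
  simp [m3, Finsupp.single_apply]
lemma m3_apply2 (n a b : ℕ) : m3 n a b 2 = b := by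
  simp [m3, Finsupp.single_apply]

lemma eq_m3 (d : Fin 3 →₀ ℕ) : d = m3 (d 0) (d 1) (d 2) := by
  ext i
  fin_cases i
  · exact (m3_apply0 _ _ _).symm
  · exact (m3_apply1 _ _ _).symm
  · exact (m3_apply2 _ _ _).symm

noncomputable def e0 : Fin 3 →₀ ℕ := Finsupp.single 0 1
noncomputable def e02 : Fin 3 →₀ ℕ := Finsupp.single 0 1 + Finsupp.single 2 1

lemma e0_le_m3 {n a b : ℕ} (hn : n ≠ 0) : e0 ≤ m3 n a b := by
  rw [Finsupp.le_def]
  intro i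
  fin_cases i
  · show e0 0 ≤ m3 n a b 0
    rw [m3_apply0]; simp [e0, Finsupp.single_apply]; omega
  · show e0 1 ≤ m3 n a b 1
    rw [m3_apply1]; simp [e0, Finsupp.single_apply]
  · show e0 2 ≤ m3 n a b 2
    rw [m3_apply2]; simp [e0, Finsupp.single_apply]

lemma m3_sub_e0 {n a b : ℕ} : m3 n a b - e0 = m3 (n - 1) a b := by
  ext i
  fin_cases i
  · show (m3 n a b - e0) 0 = m3 (n - 1) a b 0
    rw [Finsupp.tsub_apply, m3_apply0, m3_apply0]; simp [e0, Finsupp.single_apply]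
  · show (m3 n a b - e0) 1 = m3 (n - 1) a b 1
    rw [Finsupp.tsub_apply, m3_apply1, m3_apply1]; simp [e0, Finsupp.single_apply]
  · show (m3 n a b - e0) 2 = m3 (n - 1) a b 2
    rw [Finsupp.tsub_apply, m3_apply2, m3_apply2]; simp [e0, Finsupp.single_apply]

lemma e02_le_m3 {n a b : ℕ} (hn : n ≠ 0) (hb : b ≠ 0) : e02 ≤ m3 n a b := by
  rw [Finsupp.le_def]
  intro i
  fin_cases i
  · show e02 0 ≤ m3 n a b 0
    rw [m3_apply0]; simp [e02, Finsupp.single_apply]; omega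
  · show e02 1 ≤ m3 n a b 1
    rw [m3_apply1]; simp [e02, Finsupp.single_apply]
  · show e02 2 ≤ m3 n a b 2
    rw [m3_apply2]; simp [e02, Finsupp.single_apply]; omega

lemma m3_sub_e02 {n a b : ℕ} : m3 n a b - e02 = m3 (n - 1) a (b - 1) := by
  ext i
  fin_cases i
  · show (m3 n a b - e02) 0 = m3 (n - 1) a (b - 1) 0
    rw [Finsupp.tsub_apply, m3_apply0, m3_apply0]; simp [e02, Finsupp.single_apply]
  · show (m3 n a b - e02) 1 = m3 (n - 1) a (b - 1) 1
    rw [Finsupp.tsub_apply, m3_apply1, m3_apply1]; simp [e02, Finsupp.single_apply]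
  · show (m3 n a b - e02) 2 = m3 (n - 1) a (b - 1) 2
    rw [Finsupp.tsub_apply, m3_apply2, m3_apply2]; simp [e02, Finsupp.single_apply]

lemma coeff_Xv_mul (f : MvPowerSeries (Fin 3) ℚ) (n a b : ℕ) :
    MvPowerSeries.coeff (m3 n a b) (Xv * f)
      = if n = 0 then 0 else MvPowerSeries.coeff (m3 (n - 1) a b) f := by
  rw [Xv, MvPowerSeries.X, show (Finsupp.single (0 : Fin 3) 1) = e0 from rfl,
    MvPowerSeries.coeff_monomial_mul]
  rcases Nat.eq_zero_or_pos n with rfl | hn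
  · rw [if_neg, if_pos rfl]
    intro hle
    have := hle 0
    rw [m3_apply0] at this
    simp [e0, Finsupp.single_apply] at this
  · rw [if_pos (e0_le_m3 (by omega)), if_neg (by omega), one_mul, m3_sub_e0]

lemma coeff_XvZv_mul (f : MvPowerSeries (Fin 3) ℚ) (n a b : ℕ) :
    MvPowerSeries.coeff (m3 n a b) (Xv * Zv * f)
      = if n = 0 ∨ b = 0 then 0 else MvPowerSeries.coeff (m3 (n - 1) a (b - 1)) f := by
  have hXZ : Xv * Zv = MvPowerSeries.monomial e02 1 := by
    rw [Xv, Zv, MvPowerSeries.X, MvPowerSeries.X, MvPowerSeries.monomial_mul_monomial, one_mul, e02]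
  rw [hXZ, MvPowerSeries.coeff_monomial_mul]
  by_cases h : n = 0 ∨ b = 0
  · rw [if_neg, if_pos h]
    intro hle
    rcases h with h | h
    · have := hle 0
      rw [m3_apply0] at this
      simp [e02, Finsupp.single_apply, h] at this
    · have := hle 2
      rw [m3_apply2] at this
      simp [e02, Finsupp.single_apply, h] at this
  · push_neg at h
    rw [if_pos (e02_le_m3 h.1 h.2), if_neg (by tauto), one_mul, m3_sub_e02]


noncomputable def RUDf : MvPowerSeries (Fin 3) ℚ :=
  fun d => (Nat.card {p : List (ℤ × ℤ) // IsPath S3 (d 0) p ∧ U ∈ p ∧ p.head? = some U ∧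
    p.getLast? = some D ∧ dr p = d 1 ∧ hr p = d 2} : ℚ)

noncomputable def RHHf : MvPowerSeries (Fin 3) ℚ :=
  fun d => (Nat.card {p : List (ℤ × ℤ) // IsPath S3 (d 0) p ∧ U ∈ p ∧ p.head? = some Hstep ∧
    p.getLast? = some Hstep ∧ dr p = d 1 ∧ hr p = d 2} : ℚ)

lemma coeff_RUDf (n a b : ℕ) : MvPowerSeries.coeff (m3 n a b) RUDf
    = (Nat.card {p : List (ℤ × ℤ) // IsPath S3 n p ∧ U ∈ p ∧ p.head? = some U ∧
        p.getLast? = some D ∧ dr p = a ∧ hr p = b} : ℚ) := by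
  rw [MvPowerSeries.coeff_apply]
  show (Nat.card {p : List (ℤ × ℤ) // IsPath S3 (m3 n a b 0) p ∧ U ∈ p ∧ p.head? = some U ∧
    p.getLast? = some D ∧ dr p = m3 n a b 1 ∧ hr p = m3 n a b 2} : ℚ) = _
  rw [m3_apply0, m3_apply1, m3_apply2]

lemma coeff_RHHf (n a b : ℕ) : MvPowerSeries.coeff (m3 n a b) RHHf
    = (Nat.card {p : List (ℤ × ℤ) // IsPath S3 n p ∧ U ∈ p ∧ p.head? = some Hstep ∧
        p.getLast? = some Hstep ∧ dr p = a ∧ hr p = b} : ℚ) := by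
  rw [MvPowerSeries.coeff_apply]
  show (Nat.card {p : List (ℤ × ℤ) // IsPath S3 (m3 n a b 0) p ∧ U ∈ p ∧ p.head? = some Hstep ∧
    p.getLast? = some Hstep ∧ dr p = m3 n a b 1 ∧ hr p = m3 n a b 2} : ℚ) = _
  rw [m3_apply0, m3_apply1, m3_apply2]

lemma card_zero_order (P : List (ℤ × ℤ) → Prop) :
    Nat.card {p : List (ℤ × ℤ) // IsPath S3 0 p ∧ U ∈ p ∧ P p} = 0 := by
  haveI : IsEmpty {p : List (ℤ × ℤ) // IsPath S3 0 p ∧ U ∈ p ∧ P p} :=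
    ⟨fun ⟨p, hp⟩ => no_path_zero hp.1 hp.2.1⟩
  exact Nat.card_of_isEmpty

lemma card_hr_shift (n a : ℕ) (b : ℕ) (sh se : ℤ × ℤ) :
    (Nat.card {p : List (ℤ × ℤ) // IsPath S3 n p ∧ U ∈ p ∧ p.head? = some sh ∧
        p.getLast? = some se ∧ dr p = a ∧ hr p + 1 = b} : ℚ)
      = if b = 0 then 0 else
        (Nat.card {p : List (ℤ × ℤ) // IsPath S3 n p ∧ U ∈ p ∧ p.head? = some sh ∧
          p.getLast? = some se ∧ dr p = a ∧ hr p = b - 1} : ℚ) := by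
  cases b with
  | zero =>
    rw [if_pos rfl]
    haveI : IsEmpty {p : List (ℤ × ℤ) // IsPath S3 n p ∧ U ∈ p ∧ p.head? = some sh ∧
        p.getLast? = some se ∧ dr p = a ∧ hr p + 1 = 0} :=
      ⟨fun ⟨p, hp⟩ => by omega⟩
    rw [Nat.card_of_isEmpty]; norm_num
  | succ b' =>
    rw [if_neg (by omega)]
    congr 1
    refine Nat.card_congr (Equiv.subtypeEquivRight fun p => ?_)
    constructor <;> rintro ⟨h1, h2, h3, h4, h5, h6⟩ <;> exact ⟨h1, h2, h3, h4, h5, by omega⟩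

lemma constCoeff_Apoly : MvPowerSeries.constantCoeff Apoly = 1 := by
  rw [show Apoly = 1 - Xv * Zv from rfl, map_sub, map_one, map_mul]
  rw [show Xv = MvPowerSeries.X 0 from rfl, show Zv = MvPowerSeries.X 2 from rfl]
  simp [MvPowerSeries.constantCoeff_X]

/-- part of Lemma 3.1:
`(1−xz+x)²·R̄_{U2} = x(1−xz)·R̄_{UL_{S3}}` and
`(1−xz+x)²·R̄_{U3} = x(1−xz)·R̄_{UL_{S3}}`, where `U2` (resp. `U3`) consists of the
Schröder paths with at least one U step starting with H and ending with D
(resp. starting with U and ending with H). -/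
theorem lemma_U2_U3 (R2 R3 Rall : MvPowerSeries (Fin 3) ℚ)
    (hR2 : ∀ n a b : ℕ, MvPowerSeries.coeff (m3 n a b) R2 =
      (Nat.card {p : List (ℤ × ℤ) //
        IsPath S3 n p ∧ U ∈ p ∧ p.head? = some Hstep ∧ p.getLast? = some D ∧
        dr p = a ∧ hr p = b} : ℚ))
    (hR3 : ∀ n a b : ℕ, MvPowerSeries.coeff (m3 n a b) R3 =
      (Nat.card {p : List (ℤ × ℤ) //
        IsPath S3 n p ∧ U ∈ p ∧ p.head? = some U ∧ p.getLast? = some Hstep ∧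
        dr p = a ∧ hr p = b} : ℚ))
    (hRall : ∀ n a b : ℕ, MvPowerSeries.coeff (m3 n a b) Rall =
      (Nat.card {p : List (ℤ × ℤ) //
        IsPath S3 n p ∧ U ∈ p ∧ dr p = a ∧ hr p = b} : ℚ)) :
    Cpoly ^ 2 * R2 = Xv * Apoly * Rall ∧ Cpoly ^ 2 * R3 = Xv * Apoly * Rall := by
  classical
  have e1 : R2 = Xv * RUDf + Xv * Zv * R2 := by
    apply MvPowerSeries.ext
    intro d
    obtain ⟨n, a, b, rfl⟩ : ∃ n a b, d = m3 n a b := ⟨d 0, d 1, d 2, eq_m3 d⟩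
    rw [map_add, coeff_Xv_mul, coeff_XvZv_mul]
    cases n with
    | zero => rw [if_pos rfl, if_pos (Or.inl rfl), hR2, card_zero_order]; norm_num
    | succ k =>
      rw [if_neg (Nat.succ_ne_zero k), hR2, hR2, coeff_RUDf]
      simp only [Nat.add_sub_cancel]
      rw [card_prepend D k a b]
      push_cast
      rw [card_hr_shift k a b Hstep D]
      by_cases hb : b = 0
      · rw [if_pos hb, if_pos (Or.inr hb)]
      · rw [if_neg hb, if_neg (fun h => h.elim False.elim hb)]
  have e2 : R3 = Xv * RUDf + Xv * Zv * R3 := by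
    apply MvPowerSeries.ext
    intro d
    obtain ⟨n, a, b, rfl⟩ : ∃ n a b, d = m3 n a b := ⟨d 0, d 1, d 2, eq_m3 d⟩
    rw [map_add, coeff_Xv_mul, coeff_XvZv_mul]
    cases n with
    | zero => rw [if_pos rfl, if_pos (Or.inl rfl), hR3, card_zero_order]; norm_num
    | succ k =>
      rw [if_neg (Nat.succ_ne_zero k), hR3, hR3, coeff_RUDf]
      simp only [Nat.add_sub_cancel]
      rw [card_append k a b]
      push_cast
      rw [card_hr_shift k a b U Hstep]
      by_cases hb : b = 0
      · rw [if_pos hb, if_pos (Or.inr hb)]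
      · rw [if_neg hb, if_neg (fun h => h.elim False.elim hb)]
  have e3 : RHHf = Xv * R3 + Xv * Zv * RHHf := by
    apply MvPowerSeries.ext
    intro d
    obtain ⟨n, a, b, rfl⟩ : ∃ n a b, d = m3 n a b := ⟨d 0, d 1, d 2, eq_m3 d⟩
    rw [map_add, coeff_Xv_mul, coeff_XvZv_mul]
    cases n with
    | zero => rw [if_pos rfl, if_pos (Or.inl rfl), coeff_RHHf, card_zero_order]; norm_num
    | succ k =>
      rw [if_neg (Nat.succ_ne_zero k), coeff_RHHf, coeff_RHHf, hR3]
      simp only [Nat.add_sub_cancel]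
      rw [card_prepend Hstep k a b]
      push_cast
      rw [card_hr_shift k a b Hstep Hstep]
      by_cases hb : b = 0
      · rw [if_pos hb, if_pos (Or.inr hb)]
      · rw [if_neg hb, if_neg (fun h => h.elim False.elim hb)]
  have e4 : Rall = RUDf + R2 + R3 + RHHf := by
    apply MvPowerSeries.ext
    intro d
    obtain ⟨n, a, b, rfl⟩ : ∃ n a b, d = m3 n a b := ⟨d 0, d 1, d 2, eq_m3 d⟩
    rw [map_add, map_add, map_add, hRall, hR2, hR3, coeff_RUDf, coeff_RHHf,
      card_partition n a b]
    push_cast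
    ring
  have hu : IsUnit Apoly := by
    rw [MvPowerSeries.isUnit_iff_constantCoeff, constCoeff_Apoly]
    exact isUnit_one
  have hu2 : IsUnit (Apoly ^ 2) := hu.pow 2
  have hCA : Cpoly = Apoly + Xv := by
    rw [show Cpoly = 1 - Xv * Zv + Xv from rfl, show Apoly = 1 - Xv * Zv from rfl]
  have hA : Apoly = 1 - Xv * Zv := rfl
  constructor
  · refine hu2.mul_left_cancel ?_
    rw [hCA, hA]
    linear_combination (((1:MvPowerSeries (Fin 3) ℚ) - Xv*Zv) * ((1 - Xv*Zv) + Xv)^2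
        - Xv * (1 - Xv*Zv)^2) * e1
      + (- Xv * (1 - Xv*Zv)^2 - Xv^2 * (1 - Xv*Zv)) * e2
      + (- Xv * (1 - Xv*Zv)^2) * e3
      + (- Xv * (1 - Xv*Zv)^3) * e4
  · refine hu2.mul_left_cancel ?_
    rw [hCA, hA]
    linear_combination (- Xv * ((1:MvPowerSeries (Fin 3) ℚ) - Xv*Zv)^2) * e1
      + ((1 - Xv*Zv) * ((1 - Xv*Zv) + Xv)^2 - Xv^2 * (1 - Xv*Zv)
        - Xv * (1 - Xv*Zv)^2) * e2
      + (- Xv * (1 - Xv*Zv)^2) * e3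
      + (- Xv * (1 - Xv*Zv)^3) * e4
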